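/- Explicit form of pencils in the double ansatz space: let P(λ) be a regular or singular n×n matrix polynomial of degree k ≥ 2 and suppose ℒ(λ) ∈ 𝔻𝕄(P) = 𝕄₁(P) ∩ 𝕄₂(P) is written both as ℒ(λ) = [v⊗I_n, B₁] · F_Φ^P(λ) with v ∈ ℝ^k, B₁ ∈ ℝ^{kn×(k−1)n}, and as ℒ(λ) = F_Φ^P(λ)^𝓑 · [w^T⊗I_n; B₂] with w ∈ ℝ^k, B₂ ∈ ℝ^{(k−1)n×kn}. Then v = w and B₁ = B₂^𝓑. -/

import Mathlib

open Polynomial Matrix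

noncomputable section

/-- `Φ_k(λ) ⊗ I_n` as a `kn × n` polynomial matrix: its `i`-th block row (0-based)
is `φ_{k-1-i}(λ) I_n`. -/
def PhiMat (n k : ℕ) (φ : ℕ → Polynomial ℝ) :
    Matrix (Fin k × Fin n) (Fin n) (Polynomial ℝ) :=
  Matrix.of fun p s => if p.2 = s then φ (k - 1 - p.1.val) else 0

/-- The matrix polynomial `P(λ) = Σ_{i=0}^k P_i φ_i(λ)`. -/
def matP (n k : ℕ) (φ : ℕ → Polynomial ℝ) (Pm : ℕ → Matrix (Fin n) (Fin n) ℝ) :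
    Matrix (Fin n) (Fin n) (Polynomial ℝ) :=
  Matrix.of fun r s => ∑ i ∈ Finset.range (k + 1), C (Pm i r s) * φ i

/-- `v ⊗ Q` as a `kn × n` polynomial matrix. -/
def vKron (n k : ℕ) (v : Fin k → ℝ) (Q : Matrix (Fin n) (Fin n) (Polynomial ℝ)) :
    Matrix (Fin k × Fin n) (Fin n) (Polynomial ℝ) :=
  Matrix.of fun p s => C (v p.1) * Q p.2 s

/-- `v^T ⊗ Q` as an `n × kn` polynomial matrix. -/
def vKronRow (n k : ℕ) (v : Fin k → ℝ) (Q : Matrix (Fin n) (Fin n) (Polynomial ℝ)) :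
    Matrix (Fin n) (Fin k × Fin n) (Polynomial ℝ) :=
  Matrix.of fun s q => C (v q.1) * Q s q.2

/-- A matrix pencil: a matrix polynomial each of whose entries has degree at most `1`. -/
def IsPencil {m m' : Type*} (L : Matrix m m' (Polynomial ℝ)) : Prop :=
  ∀ p q, (L p q).degree ≤ 1

/-- `ℒ(λ) ∈ 𝕄₁(P)` with ansatz vector `v`, i.e. `ℒ(λ)(Φ_k(λ) ⊗ I_n) = v ⊗ P(λ)`. -/
def Ansatz1 (n k : ℕ) (φ : ℕ → Polynomial ℝ) (Pm : ℕ → Matrix (Fin n) (Fin n) ℝ)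
    (L : Matrix (Fin k × Fin n) (Fin k × Fin n) (Polynomial ℝ)) (v : Fin k → ℝ) : Prop :=
  L * PhiMat n k φ = vKron n k v (matP n k φ Pm)

/-- `ℒ(λ) ∈ 𝕄₂(P)` with ansatz vector `w`, i.e. `(Φ_k(λ)^T ⊗ I_n) ℒ(λ) = w^T ⊗ P(λ)`. -/
def Ansatz2 (n k : ℕ) (φ : ℕ → Polynomial ℝ) (Pm : ℕ → Matrix (Fin n) (Fin n) ℝ)
    (L : Matrix (Fin k × Fin n) (Fin k × Fin n) (Polynomial ℝ)) (w : Fin k → ℝ) : Prop :=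
  (PhiMat n k φ)ᵀ * L = vKronRow n k w (matP n k φ Pm)

/-- The anchor pencil `F_Φ^P(λ) = [m_Φ^P(λ); M_Φ(λ)]`. -/
def FPhi (n k : ℕ) (a b c : ℕ → ℝ) (Pm : ℕ → Matrix (Fin n) (Fin n) ℝ) :
    Matrix (Fin k × Fin n) (Fin k × Fin n) (Polynomial ℝ) :=
  Matrix.of fun p q =>
    if p.1.val = 0 then
      -- the block row m_Φ^P(λ)
      if q.1.val = 0 then
        C ((a (k - 1))⁻¹) * (X - C (b (k - 1))) * C (Pm k p.2 q.2) + C (Pm (k - 1) p.2 q.2)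
      else if q.1.val = 1 then
        C (Pm (k - 2) p.2 q.2) - C (c (k - 1) / a (k - 1)) * C (Pm k p.2 q.2)
      else
        C (Pm (k - 1 - q.1.val) p.2 q.2)
    else
      -- the block rows M_Φ(λ) = M_Φ^⋆(λ) ⊗ I_n
      (if q.1.val + 1 = p.1.val then -C (a (k - 1 - p.1.val))
       else if q.1.val = p.1.val then X - C (b (k - 1 - p.1.val))
       else if q.1.val = p.1.val + 1 then -C (c (k - 1 - p.1.val))
       else 0) * (if p.2 = q.2 then 1 else 0)

/-- The `kn × kn` real matrix `[v ⊗ I_n, B]`: first `n` columns form `v ⊗ I_n`,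
the remaining `(k-1)n` columns form `B`. -/
def extCols (n k : ℕ) (v : Fin k → ℝ)
    (B : Matrix (Fin k × Fin n) (Fin (k - 1) × Fin n) ℝ) :
    Matrix (Fin k × Fin n) (Fin k × Fin n) ℝ :=
  Matrix.of fun p q =>
    if h : q.1.val = 0 then (if p.2 = q.2 then v p.1 else 0)
    else B p (⟨q.1.val - 1, by have := q.1.isLt; omega⟩, q.2)

/-- The `kn × kn` real matrix `[w^T ⊗ I_n; B]`: first `n` rows form `w^T ⊗ I_n`,
the remaining `(k-1)n` rows form `B`. -/
def extRows (n k : ℕ) (w : Fin k → ℝ)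
    (B : Matrix (Fin (k - 1) × Fin n) (Fin k × Fin n) ℝ) :
    Matrix (Fin k × Fin n) (Fin k × Fin n) ℝ :=
  Matrix.of fun p q =>
    if h : p.1.val = 0 then (if p.2 = q.2 then w q.1 else 0)
    else B (⟨p.1.val - 1, by have := p.1.isLt; omega⟩, p.2) q

/-- A real matrix viewed as a constant matrix polynomial. -/
def liftC {m m' : Type*} (A : Matrix m m' ℝ) : Matrix m m' (Polynomial ℝ) :=
  A.map C

/-- Block transpose of a matrix consisting of `n × n` blocks: block `(i,j)` of `A^𝓑`
is block `(j,i)` of `A`. -/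
def blockTr {n k1 k2 : ℕ} {R : Type*} (A : Matrix (Fin k1 × Fin n) (Fin k2 × Fin n) R) :
    Matrix (Fin k2 × Fin n) (Fin k1 × Fin n) R :=
  Matrix.of fun p q => A (q.1, p.2) (p.1, q.2)

/-- `rev_d Q(λ) = λ^d Q(1/λ)`, entrywise reversal of a matrix polynomial of degree at most `d`. -/
def revMat {m m' : Type*} (d : ℕ) (L : Matrix m m' (Polynomial ℝ)) :
    Matrix m m' (Polynomial ℝ) :=
  Matrix.of fun p q => (L p q).reflect d

/-- Evaluation of a real matrix polynomial at a complex number. -/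
def evalC {m m' : Type*} (α : ℂ) (L : Matrix m m' (Polynomial ℝ)) : Matrix m m' ℂ :=
  Matrix.of fun p q => aeval α (L p q)

/-- A matrix polynomial viewed as a matrix over the field `ℝ(λ)` of rational functions. -/
def liftRat {m m' : Type*} (L : Matrix m m' (Polynomial ℝ)) : Matrix m m' (RatFunc ℝ) :=
  L.map (algebraMap (Polynomial ℝ) (RatFunc ℝ))

/-- `v ⊗ I_n` as a `kn × n` complex matrix. -/
def vKronC (n k : ℕ) (v : Fin k → ℝ) : Matrix (Fin k × Fin n) (Fin n) ℂ :=
  Matrix.of fun p s => if p.2 = s then (v p.1 : ℂ) else 0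

/-- `v ⊗ I_n` as a `kn × n` matrix over `ℝ(λ)`. -/
def vKronRat (n k : ℕ) (v : Fin k → ℝ) : Matrix (Fin k × Fin n) (Fin n) (RatFunc ℝ) :=
  Matrix.of fun p s => if p.2 = s then RatFunc.C (v p.1) else 0

/-- The pencil `Xm λ + Ym` as a matrix polynomial. -/
def pencilPoly {m : Type*} (Xm Ym : Matrix m m ℝ) : Matrix m m (Polynomial ℝ) :=
  Matrix.of fun p q => C (Xm p q) * X + C (Ym p q)

/-- `diag(P(λ), I_{(k-1)n})` as a `kn × kn` matrix polynomial. -/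
def diagPI (n k : ℕ) (Pp : Matrix (Fin n) (Fin n) (Polynomial ℝ)) :
    Matrix (Fin k × Fin n) (Fin k × Fin n) (Polynomial ℝ) :=
  Matrix.of fun p q =>
    if p.1.val = 0 ∧ q.1.val = 0 then Pp p.2 q.2 else if p = q then 1 else 0

/-- `ℒ(λ)` is a linearization of `P(λ)`: there are `U(λ), V(λ)` with nonzero real constant
determinants such that `U(λ)ℒ(λ)V(λ) = diag(P(λ), I_{(k-1)n})`. -/
def IsLinearization (n k : ℕ)
    (L : Matrix (Fin k × Fin n) (Fin k × Fin n) (Polynomial ℝ))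
    (Pp : Matrix (Fin n) (Fin n) (Polynomial ℝ)) : Prop :=
  ∃ U V : Matrix (Fin k × Fin n) (Fin k × Fin n) (Polynomial ℝ),
    (∃ cu : ℝ, cu ≠ 0 ∧ U.det = C cu) ∧ (∃ cv : ℝ, cv ≠ 0 ∧ V.det = C cv) ∧
    U * L * V = diagPI n k Pp

/-- `ℒ(λ)` is a strong linearization of `P(λ)` (of degree `k`): it is a linearization and
`rev₁ ℒ(λ)` is a linearization of `rev_k P(λ)`. -/
def IsStrongLin (n k : ℕ)
    (L : Matrix (Fin k × Fin n) (Fin k × Fin n) (Polynomial ℝ))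
    (Pp : Matrix (Fin n) (Fin n) (Polynomial ℝ)) : Prop :=
  IsLinearization n k L Pp ∧ IsLinearization n k (revMat 1 L) (revMat k Pp)

namespace S14

def b1f (n k : ℕ) (B₁ : Matrix (Fin k × Fin n) (Fin (k - 1) × Fin n) ℝ)
    (i m : ℕ) (r t : Fin n) : ℝ :=
  if h : i < k ∧ m < k - 1 then B₁ (⟨i, h.1⟩, r) (⟨m, h.2⟩, t) else 0

lemma sum_erase_eq {k : ℕ} (hk : 0 < k) (m : ℕ) (hm : 1 ≤ m) (g : Fin k → Polynomial ℝ) :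
    (∑ l ∈ Finset.univ.erase (⟨0, hk⟩ : Fin k), if m = l.val then g l else 0) =
    if h : m < k then g ⟨m, h⟩ else 0 := by
  by_cases h : m < k
  · rw [dif_pos h, Finset.sum_eq_single_of_mem (⟨m, h⟩ : Fin k)]
    · rw [if_pos rfl]
    · refine Finset.mem_erase.mpr ⟨?_, Finset.mem_univ _⟩
      intro hc
      have : m = 0 := congrArg Fin.val hc
      omega
    · intro l _ hne
      rw [if_neg]
      intro hc
      exact hne (Fin.ext hc.symm)
  · rw [dif_neg h, Finset.sum_eq_zero]
    intro l _
    rw [if_neg]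
    have := l.isLt
    omega

lemma lemL (n k : ℕ) (hk : 2 ≤ k) (a b c : ℕ → ℝ) (Pm : ℕ → Matrix (Fin n) (Fin n) ℝ)
    (v : Fin k → ℝ) (B₁ : Matrix (Fin k × Fin n) (Fin (k - 1) × Fin n) ℝ)
    (i j : ℕ) (hi : i < k) (hj : j < k) (r t : Fin n) :
    (liftC (extCols n k v B₁) * FPhi n k a b c Pm) (⟨i, hi⟩, r) (⟨j, hj⟩, t) =
      C (v ⟨i, hi⟩) * FPhi n k a b c Pm (⟨0, by omega⟩, r) (⟨j, hj⟩, t)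
      + (if j + 1 ≤ k - 1 then C (b1f n k B₁ i j r t) * (-C (a (k - 2 - j))) else 0)
      + (if 1 ≤ j then C (b1f n k B₁ i (j - 1) r t) * (X - C (b (k - 1 - j))) else 0)
      + (if 2 ≤ j then C (b1f n k B₁ i (j - 2) r t) * (-C (c (k - j))) else 0) := by
  have hk0 : 0 < k := by omega
  set l0 : Fin k := ⟨0, hk0⟩ with hl0
  rw [Matrix.mul_apply, Fintype.sum_prod_type]
  have hsum : ∀ l : Fin k,
      (∑ x : Fin n, liftC (extCols n k v B₁) (⟨i, hi⟩, r) (l, x) *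
        FPhi n k a b c Pm (l, x) (⟨j, hj⟩, t)) =
      if l.val = 0 then C (v ⟨i, hi⟩) * FPhi n k a b c Pm (l0, r) (⟨j, hj⟩, t)
      else C (b1f n k B₁ i (l.val - 1) r t) *
        (if j + 1 = l.val then -C (a (k - 1 - l.val))
         else if j = l.val then X - C (b (k - 1 - l.val))
         else if j = l.val + 1 then -C (c (k - 1 - l.val)) else 0) := by
    intro l
    by_cases hl : l.val = 0
    · rw [if_pos hl]
      have hleq : l = l0 := Fin.ext hl
      subst hleq
      have hstep0 : ∀ x : Fin n,
          liftC (extCols n k v B₁) (⟨i, hi⟩, r) (l0, x) *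
            FPhi n k a b c Pm (l0, x) (⟨j, hj⟩, t) =
          if r = x then C (v ⟨i, hi⟩) * FPhi n k a b c Pm (l0, x) (⟨j, hj⟩, t) else 0 := by
        intro x
        have hE : extCols n k v B₁ (⟨i, hi⟩, r) (l0, x) = if r = x then v ⟨i, hi⟩ else 0 := by
          simp [extCols, hl]
        show C (extCols n k v B₁ (⟨i, hi⟩, r) (l0, x)) * _ = _
        rw [hE]
        split_ifs with h
        · rfl
        · rw [map_zero, zero_mul]
      rw [Finset.sum_congr rfl (fun x _ => hstep0 x),
        Finset.sum_ite_eq Finset.univ r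
          (fun x => C (v ⟨i, hi⟩) * FPhi n k a b c Pm (l0, x) (⟨j, hj⟩, t)),
        if_pos (Finset.mem_univ r)]
    · rw [if_neg hl]
      have hl1 : 1 ≤ l.val := Nat.one_le_iff_ne_zero.mpr hl
      have hstep : ∀ x : Fin n,
          liftC (extCols n k v B₁) (⟨i, hi⟩, r) (l, x) *
            FPhi n k a b c Pm (l, x) (⟨j, hj⟩, t) =
          if x = t then C (b1f n k B₁ i (l.val - 1) r x) *
            (if j + 1 = l.val then -C (a (k - 1 - l.val))
             else if j = l.val then X - C (b (k - 1 - l.val))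
             else if j = l.val + 1 then -C (c (k - 1 - l.val)) else 0) else 0 := by
        intro x
        have h1 : liftC (extCols n k v B₁) (⟨i, hi⟩, r) (l, x) =
            C (b1f n k B₁ i (l.val - 1) r x) := by
          show C (extCols n k v B₁ (⟨i, hi⟩, r) (l, x)) = _
          congr 1
          show (if h : l.val = 0 then _ else B₁ (⟨i, hi⟩, r) (⟨l.val - 1, _⟩, x)) = _
          rw [dif_neg hl]
          unfold b1f
          rw [dif_pos ⟨hi, by have := l.isLt; omega⟩]
        have h2 : FPhi n k a b c Pm (l, x) (⟨j, hj⟩, t) =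
            (if j + 1 = l.val then -C (a (k - 1 - l.val))
             else if j = l.val then X - C (b (k - 1 - l.val))
             else if j = l.val + 1 then -C (c (k - 1 - l.val)) else 0) *
            (if x = t then 1 else 0) := by
          show (if (l.val = 0) then _ else _) = _
          rw [if_neg hl]
        rw [h1, h2]
        split_ifs <;> ring
      rw [Finset.sum_congr rfl (fun x _ => hstep x), Finset.sum_ite_eq' Finset.univ t]
      rw [if_pos (Finset.mem_univ t)]
  rw [Finset.sum_congr rfl (fun l _ => hsum l)]
  rw [← Finset.sum_erase_add Finset.univ _ (Finset.mem_univ l0)]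
  rw [if_pos rfl]
  have herase : ∀ l ∈ Finset.univ.erase l0,
      (if l.val = 0 then C (v ⟨i, hi⟩) * FPhi n k a b c Pm (l0, r) (⟨j, hj⟩, t)
       else C (b1f n k B₁ i (l.val - 1) r t) *
        (if j + 1 = l.val then -C (a (k - 1 - l.val))
         else if j = l.val then X - C (b (k - 1 - l.val))
         else if j = l.val + 1 then -C (c (k - 1 - l.val)) else 0)) =
      (if j + 1 = l.val then C (b1f n k B₁ i (l.val - 1) r t) * (-C (a (k - 1 - l.val))) else 0)
      + (if j = l.val then C (b1f n k B₁ i (l.val - 1) r t) * (X - C (b (k - 1 - l.val))) else 0)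
      + (if j = l.val + 1 then C (b1f n k B₁ i (l.val - 1) r t) * (-C (c (k - 1 - l.val))) else 0) := by
    intro l hl
    have hlv : l.val ≠ 0 := by
      intro hc
      exact (Finset.mem_erase.mp hl).1 (Fin.ext hc)
    rw [if_neg hlv]
    split_ifs <;> first | ring1 | (exfalso; omega)
  rw [Finset.sum_congr rfl herase]
  rw [Finset.sum_add_distrib, Finset.sum_add_distrib]
  rw [sum_erase_eq hk0 (j+1) (by omega)]
  have e2 : (∑ l ∈ Finset.univ.erase l0,
      if j = l.val then C (b1f n k B₁ i (l.val - 1) r t) * (X - C (b (k - 1 - l.val))) else 0) =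
      if 1 ≤ j then C (b1f n k B₁ i (j - 1) r t) * (X - C (b (k - 1 - j))) else 0 := by
    by_cases hj1 : 1 ≤ j
    · rw [if_pos hj1, sum_erase_eq hk0 j hj1, dif_pos hj]
    · rw [if_neg hj1, Finset.sum_eq_zero]
      intro l hl
      have hlv : l.val ≠ 0 := fun hc => (Finset.mem_erase.mp hl).1 (Fin.ext hc)
      rw [if_neg]; omega
  have e3 : (∑ l ∈ Finset.univ.erase l0,
      if j = l.val + 1 then C (b1f n k B₁ i (l.val - 1) r t) * (-C (c (k - 1 - l.val))) else 0) =
      if 2 ≤ j then C (b1f n k B₁ i (j - 2) r t) * (-C (c (k - j))) else 0 := by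
    by_cases hj2 : 2 ≤ j
    · have hcongr : ∀ l ∈ Finset.univ.erase l0,
          (if j = l.val + 1 then C (b1f n k B₁ i (l.val - 1) r t) * (-C (c (k - 1 - l.val))) else 0) =
          (if j - 1 = l.val then C (b1f n k B₁ i (l.val - 1) r t) * (-C (c (k - 1 - l.val))) else 0) := by
        intro l _
        split_ifs with h1 h2 <;> first | rfl | (exfalso; omega)
      rw [if_pos hj2, Finset.sum_congr rfl hcongr, sum_erase_eq hk0 (j-1) (by omega),
        dif_pos (by omega : j - 1 < k)]
      have e1 : j - 1 - 1 = j - 2 := by omega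
      have e2' : k - 1 - (j - 1) = k - j := by omega
      rw [e1, e2']
    · rw [if_neg hj2, Finset.sum_eq_zero]
      intro l hl
      have hlv : l.val ≠ 0 := fun hc => (Finset.mem_erase.mp hl).1 (Fin.ext hc)
      rw [if_neg]; omega
  rw [e2, e3]
  have e1 : (if h : j + 1 < k then
        C (b1f n k B₁ i (j + 1 - 1) r t) * (-C (a (k - 1 - (j + 1)))) else 0) =
      if j + 1 ≤ k - 1 then C (b1f n k B₁ i j r t) * (-C (a (k - 2 - j))) else 0 := by
    by_cases h : j + 1 < k
    · rw [dif_pos h, if_pos (by omega)]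
      have : k - 1 - (j+1) = k - 2 - j := by omega
      rw [Nat.add_sub_cancel, this]
    · rw [dif_neg h, if_neg (by omega)]
  rw [e1]
  ring



def b2f (n k : ℕ) (B₂ : Matrix (Fin (k - 1) × Fin n) (Fin k × Fin n) ℝ)
    (m j : ℕ) (r t : Fin n) : ℝ :=
  if h : m < k - 1 ∧ j < k then B₂ (⟨m, h.1⟩, r) (⟨j, h.2⟩, t) else 0

lemma lemR (n k : ℕ) (hk : 2 ≤ k) (a b c : ℕ → ℝ) (Pm : ℕ → Matrix (Fin n) (Fin n) ℝ)
    (w : Fin k → ℝ) (B₂ : Matrix (Fin (k - 1) × Fin n) (Fin k × Fin n) ℝ)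
    (i j : ℕ) (hi : i < k) (hj : j < k) (r t : Fin n) :
    (blockTr (FPhi n k a b c Pm) * liftC (extRows n k w B₂)) (⟨i, hi⟩, r) (⟨j, hj⟩, t) =
      FPhi n k a b c Pm (⟨0, by omega⟩, r) (⟨i, hi⟩, t) * C (w ⟨j, hj⟩)
      + (if i + 1 ≤ k - 1 then C (b2f n k B₂ i j r t) * (-C (a (k - 2 - i))) else 0)
      + (if 1 ≤ i then C (b2f n k B₂ (i - 1) j r t) * (X - C (b (k - 1 - i))) else 0)
      + (if 2 ≤ i then C (b2f n k B₂ (i - 2) j r t) * (-C (c (k - i))) else 0) := by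
  have hk0 : 0 < k := by omega
  set l0 : Fin k := ⟨0, hk0⟩ with hl0
  rw [Matrix.mul_apply, Fintype.sum_prod_type]
  have hBT : ∀ (l : Fin k) (x : Fin n),
      blockTr (FPhi n k a b c Pm) (⟨i, hi⟩, r) (l, x) = FPhi n k a b c Pm (l, r) (⟨i, hi⟩, x) := by
    intro l x; rfl
  have hsum : ∀ l : Fin k,
      (∑ x : Fin n, blockTr (FPhi n k a b c Pm) (⟨i, hi⟩, r) (l, x) *
        liftC (extRows n k w B₂) (l, x) (⟨j, hj⟩, t)) =
      if l.val = 0 then FPhi n k a b c Pm (l0, r) (⟨i, hi⟩, t) * C (w ⟨j, hj⟩)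
      else (if i + 1 = l.val then -C (a (k - 1 - l.val))
         else if i = l.val then X - C (b (k - 1 - l.val))
         else if i = l.val + 1 then -C (c (k - 1 - l.val)) else 0) *
        C (b2f n k B₂ (l.val - 1) j r t) := by
    intro l
    by_cases hl : l.val = 0
    · rw [if_pos hl]
      have hleq : l = l0 := Fin.ext hl
      subst hleq
      have hstep0 : ∀ x : Fin n,
          blockTr (FPhi n k a b c Pm) (⟨i, hi⟩, r) (l0, x) *
            liftC (extRows n k w B₂) (l0, x) (⟨j, hj⟩, t) =
          if x = t then FPhi n k a b c Pm (l0, r) (⟨i, hi⟩, x) * C (w ⟨j, hj⟩) else 0 := by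
        intro x
        rw [hBT]
        have hE : extRows n k w B₂ (l0, x) (⟨j, hj⟩, t) = if x = t then w ⟨j, hj⟩ else 0 := by
          simp [extRows, hl]
        show _ * C (extRows n k w B₂ (l0, x) (⟨j, hj⟩, t)) = _
        rw [hE]
        split_ifs with h
        · rfl
        · rw [map_zero, mul_zero]
      rw [Finset.sum_congr rfl (fun x _ => hstep0 x),
        Finset.sum_ite_eq' Finset.univ t
          (fun x => FPhi n k a b c Pm (l0, r) (⟨i, hi⟩, x) * C (w ⟨j, hj⟩)),
        if_pos (Finset.mem_univ t)]
    · rw [if_neg hl]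
      have hstep : ∀ x : Fin n,
          blockTr (FPhi n k a b c Pm) (⟨i, hi⟩, r) (l, x) *
            liftC (extRows n k w B₂) (l, x) (⟨j, hj⟩, t) =
          if r = x then (if i + 1 = l.val then -C (a (k - 1 - l.val))
             else if i = l.val then X - C (b (k - 1 - l.val))
             else if i = l.val + 1 then -C (c (k - 1 - l.val)) else 0) *
            C (b2f n k B₂ (l.val - 1) j x t) else 0 := by
        intro x
        rw [hBT]
        have h2 : FPhi n k a b c Pm (l, r) (⟨i, hi⟩, x) =
            (if i + 1 = l.val then -C (a (k - 1 - l.val))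
             else if i = l.val then X - C (b (k - 1 - l.val))
             else if i = l.val + 1 then -C (c (k - 1 - l.val)) else 0) *
            (if r = x then 1 else 0) := by
          show (if (l.val = 0) then _ else _) = _
          rw [if_neg hl]
        have h1 : liftC (extRows n k w B₂) (l, x) (⟨j, hj⟩, t) =
            C (b2f n k B₂ (l.val - 1) j x t) := by
          show C (extRows n k w B₂ (l, x) (⟨j, hj⟩, t)) = _
          congr 1
          show (if h : l.val = 0 then _ else B₂ (⟨l.val - 1, _⟩, x) (⟨j, hj⟩, t)) = _
          rw [dif_neg hl]
          unfold b2f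
          rw [dif_pos ⟨by have := l.isLt; omega, hj⟩]
        rw [h1, h2]
        split_ifs <;> ring
      rw [Finset.sum_congr rfl (fun x _ => hstep x), Finset.sum_ite_eq Finset.univ r _,
        if_pos (Finset.mem_univ r)]
  rw [Finset.sum_congr rfl (fun l _ => hsum l)]
  rw [← Finset.sum_erase_add Finset.univ _ (Finset.mem_univ l0)]
  rw [if_pos rfl]
  have herase : ∀ l ∈ Finset.univ.erase l0,
      (if l.val = 0 then FPhi n k a b c Pm (l0, r) (⟨i, hi⟩, t) * C (w ⟨j, hj⟩)
       else (if i + 1 = l.val then -C (a (k - 1 - l.val))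
         else if i = l.val then X - C (b (k - 1 - l.val))
         else if i = l.val + 1 then -C (c (k - 1 - l.val)) else 0) *
        C (b2f n k B₂ (l.val - 1) j r t)) =
      (if i + 1 = l.val then C (b2f n k B₂ (l.val - 1) j r t) * (-C (a (k - 1 - l.val))) else 0)
      + (if i = l.val then C (b2f n k B₂ (l.val - 1) j r t) * (X - C (b (k - 1 - l.val))) else 0)
      + (if i = l.val + 1 then C (b2f n k B₂ (l.val - 1) j r t) * (-C (c (k - 1 - l.val))) else 0) := by
    intro l hl
    have hlv : l.val ≠ 0 := fun hc => (Finset.mem_erase.mp hl).1 (Fin.ext hc)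
    rw [if_neg hlv]
    split_ifs <;> first | ring1 | (exfalso; omega)
  rw [Finset.sum_congr rfl herase]
  rw [Finset.sum_add_distrib, Finset.sum_add_distrib]
  rw [sum_erase_eq hk0 (i+1) (by omega)]
  have e2 : (∑ l ∈ Finset.univ.erase l0,
      if i = l.val then C (b2f n k B₂ (l.val - 1) j r t) * (X - C (b (k - 1 - l.val))) else 0) =
      if 1 ≤ i then C (b2f n k B₂ (i - 1) j r t) * (X - C (b (k - 1 - i))) else 0 := by
    by_cases hi1 : 1 ≤ i
    · rw [if_pos hi1, sum_erase_eq hk0 i hi1, dif_pos hi]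
    · rw [if_neg hi1, Finset.sum_eq_zero]
      intro l hl
      have hlv : l.val ≠ 0 := fun hc => (Finset.mem_erase.mp hl).1 (Fin.ext hc)
      rw [if_neg]; omega
  have e3 : (∑ l ∈ Finset.univ.erase l0,
      if i = l.val + 1 then C (b2f n k B₂ (l.val - 1) j r t) * (-C (c (k - 1 - l.val))) else 0) =
      if 2 ≤ i then C (b2f n k B₂ (i - 2) j r t) * (-C (c (k - i))) else 0 := by
    by_cases hi2 : 2 ≤ i
    · have hcongr : ∀ l ∈ Finset.univ.erase l0,
          (if i = l.val + 1 then C (b2f n k B₂ (l.val - 1) j r t) * (-C (c (k - 1 - l.val))) else 0) =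
          (if i - 1 = l.val then C (b2f n k B₂ (l.val - 1) j r t) * (-C (c (k - 1 - l.val))) else 0) := by
        intro l _
        split_ifs <;> first | rfl | (exfalso; omega)
      rw [if_pos hi2, Finset.sum_congr rfl hcongr, sum_erase_eq hk0 (i-1) (by omega),
        dif_pos (by omega : i - 1 < k)]
      have d1 : i - 1 - 1 = i - 2 := by omega
      have d2 : k - 1 - (i - 1) = k - i := by omega
      rw [d1, d2]
    · rw [if_neg hi2, Finset.sum_eq_zero]
      intro l hl
      have hlv : l.val ≠ 0 := fun hc => (Finset.mem_erase.mp hl).1 (Fin.ext hc)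
      rw [if_neg]; omega
  rw [e2, e3]
  have e1 : (if h : i + 1 < k then
        C (b2f n k B₂ (i + 1 - 1) j r t) * (-C (a (k - 1 - (i + 1)))) else 0) =
      if i + 1 ≤ k - 1 then C (b2f n k B₂ i j r t) * (-C (a (k - 2 - i))) else 0 := by
    by_cases h : i + 1 < k
    · rw [dif_pos h, if_pos (by omega)]
      have : k - 1 - (i+1) = k - 2 - i := by omega
      rw [Nat.add_sub_cancel, this]
    · rw [dif_neg h, if_neg (by omega)]
  rw [e1]
  ring


lemma coeff_ite (P : Prop) [Decidable P] (p : Polynomial ℝ) (m : ℕ) :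
    (if P then p else 0).coeff m = if P then p.coeff m else 0 := by
  split_ifs <;> simp

lemma d1 (x : ℝ) : (-C x : Polynomial ℝ).coeff 1 = 0 := by simp

lemma d2 (x : ℝ) : (X - C x : Polynomial ℝ).coeff 1 = 1 := by
  rw [coeff_sub, coeff_X_one, coeff_C]; simp

lemma d3 (x : ℝ) : (-C x : Polynomial ℝ).coeff 0 = -x := by simp

lemma d4 (x : ℝ) : (X - C x : Polynomial ℝ).coeff 0 = -x := by
  rw [coeff_sub, coeff_X_zero, coeff_C_zero]; ring

lemma F0c1 (n k : ℕ) (hk : 2 ≤ k) (a b c : ℕ → ℝ) (Pm : ℕ → Matrix (Fin n) (Fin n) ℝ)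
    (j : ℕ) (hj : j < k) (r t : Fin n) :
    (FPhi n k a b c Pm (⟨0, by omega⟩, r) (⟨j, hj⟩, t)).coeff 1 =
      if j = 0 then (a (k - 1))⁻¹ * Pm k r t else 0 := by
  have h0 : FPhi n k a b c Pm (⟨0, by omega⟩, r) (⟨j, hj⟩, t) =
      (if j = 0 then
        C ((a (k - 1))⁻¹) * (X - C (b (k - 1))) * C (Pm k r t) + C (Pm (k - 1) r t)
      else if j = 1 then
        C (Pm (k - 2) r t) - C (c (k - 1) / a (k - 1)) * C (Pm k r t)
      else C (Pm (k - 1 - j) r t)) := rfl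
  rw [h0]
  by_cases h : j = 0
  · rw [if_pos h, if_pos h]
    simp [coeff_add, mul_sub, sub_mul, coeff_sub, mul_assoc]
  · rw [if_neg h, if_neg h]
    by_cases h1 : j = 1
    · rw [if_pos h1]
      simp [coeff_sub]
    · rw [if_neg h1]
      simp

def fcf (n k : ℕ) (a b c : ℕ → ℝ) (Pm : ℕ → Matrix (Fin n) (Fin n) ℝ)
    (j : ℕ) (r t : Fin n) : ℝ :=
  if h : j < k ∧ 0 < k then
    (FPhi n k a b c Pm (⟨0, h.2⟩, r) (⟨j, h.1⟩, t)).coeff 0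
  else 0

lemma fcf_eq (n k : ℕ) (hk : 2 ≤ k) (a b c : ℕ → ℝ) (Pm : ℕ → Matrix (Fin n) (Fin n) ℝ)
    (j : ℕ) (hj : j < k) (r t : Fin n) :
    (FPhi n k a b c Pm (⟨0, by omega⟩, r) (⟨j, hj⟩, t)).coeff 0 =
      fcf n k a b c Pm j r t := by
  unfold fcf
  rw [dif_pos ⟨hj, by omega⟩]

lemma lemLam (n k : ℕ) (hk : 2 ≤ k) (a b c : ℕ → ℝ) (Pm : ℕ → Matrix (Fin n) (Fin n) ℝ)
    (v w : Fin k → ℝ) (B₁ : Matrix (Fin k × Fin n) (Fin (k - 1) × Fin n) ℝ)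
    (B₂ : Matrix (Fin (k - 1) × Fin n) (Fin k × Fin n) ℝ)
    (heq : liftC (extCols n k v B₁) * FPhi n k a b c Pm =
      blockTr (FPhi n k a b c Pm) * liftC (extRows n k w B₂))
    (i j : ℕ) (hi : i < k) (hj : j < k) (r t : Fin n) :
    v ⟨i, hi⟩ * (if j = 0 then (a (k - 1))⁻¹ * Pm k r t else 0)
      + (if 1 ≤ j then b1f n k B₁ i (j - 1) r t else 0)
    = (if i = 0 then (a (k - 1))⁻¹ * Pm k r t else 0) * w ⟨j, hj⟩
      + (if 1 ≤ i then b2f n k B₂ (i - 1) j r t else 0) := by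
  have hE : (liftC (extCols n k v B₁) * FPhi n k a b c Pm) (⟨i, hi⟩, r) (⟨j, hj⟩, t) =
      (blockTr (FPhi n k a b c Pm) * liftC (extRows n k w B₂)) (⟨i, hi⟩, r) (⟨j, hj⟩, t) := by
    rw [heq]
  rw [lemL n k hk a b c Pm v B₁ i j hi hj r t, lemR n k hk a b c Pm w B₂ i j hi hj r t] at hE
  have h1 := congrArg (fun p : Polynomial ℝ => p.coeff 1) hE
  simp only [coeff_add, coeff_ite, coeff_C_mul, coeff_mul_C, d1, d2,
    mul_zero, mul_one, F0c1 n k hk a b c Pm, ite_self, add_zero, zero_add] at h1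
  linear_combination h1

lemma lemCc (n k : ℕ) (hk : 2 ≤ k) (a b c : ℕ → ℝ) (Pm : ℕ → Matrix (Fin n) (Fin n) ℝ)
    (v w : Fin k → ℝ) (B₁ : Matrix (Fin k × Fin n) (Fin (k - 1) × Fin n) ℝ)
    (B₂ : Matrix (Fin (k - 1) × Fin n) (Fin k × Fin n) ℝ)
    (heq : liftC (extCols n k v B₁) * FPhi n k a b c Pm =
      blockTr (FPhi n k a b c Pm) * liftC (extRows n k w B₂))
    (i j : ℕ) (hi : i < k) (hj : j < k) (r t : Fin n) :
    v ⟨i, hi⟩ * fcf n k a b c Pm j r t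
      + (if j + 1 ≤ k - 1 then -(b1f n k B₁ i j r t * a (k - 2 - j)) else 0)
      + (if 1 ≤ j then -(b1f n k B₁ i (j - 1) r t * b (k - 1 - j)) else 0)
      + (if 2 ≤ j then -(b1f n k B₁ i (j - 2) r t * c (k - j)) else 0)
    = fcf n k a b c Pm i r t * w ⟨j, hj⟩
      + (if i + 1 ≤ k - 1 then -(b2f n k B₂ i j r t * a (k - 2 - i)) else 0)
      + (if 1 ≤ i then -(b2f n k B₂ (i - 1) j r t * b (k - 1 - i)) else 0)
      + (if 2 ≤ i then -(b2f n k B₂ (i - 2) j r t * c (k - i)) else 0) := by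
  have hE : (liftC (extCols n k v B₁) * FPhi n k a b c Pm) (⟨i, hi⟩, r) (⟨j, hj⟩, t) =
      (blockTr (FPhi n k a b c Pm) * liftC (extRows n k w B₂)) (⟨i, hi⟩, r) (⟨j, hj⟩, t) := by
    rw [heq]
  rw [lemL n k hk a b c Pm v B₁ i j hi hj r t, lemR n k hk a b c Pm w B₂ i j hi hj r t] at hE
  have h0 := congrArg (fun p : Polynomial ℝ => p.coeff 0) hE
  simp only [coeff_add, coeff_ite, coeff_C_mul, coeff_mul_C, d3, d4, mul_neg,
    coeff_neg, ← C_mul, coeff_C_zero,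
    fcf_eq n k hk a b c Pm, ite_self, add_zero, zero_add] at h0
  linear_combination h0

section Lam

variable (n k : ℕ) (a b c : ℕ → ℝ) (Pm : ℕ → Matrix (Fin n) (Fin n) ℝ)
  (v w : Fin k → ℝ) (B₁ : Matrix (Fin k × Fin n) (Fin (k - 1) × Fin n) ℝ)
  (B₂ : Matrix (Fin (k - 1) × Fin n) (Fin k × Fin n) ℝ)

lemma lamB (hk : 2 ≤ k) (heq : liftC (extCols n k v B₁) * FPhi n k a b c Pm =
      blockTr (FPhi n k a b c Pm) * liftC (extRows n k w B₂))
    (m : ℕ) (h1 : 1 ≤ m) (hm : m < k) (r t : Fin n) :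
    b1f n k B₁ 0 (m - 1) r t = (a (k - 1))⁻¹ * Pm k r t * w ⟨m, hm⟩ := by
  have h := lemLam n k hk a b c Pm v w B₁ B₂ heq 0 m (by omega) hm r t
  rw [if_neg (by omega : ¬ m = 0), if_pos h1, if_pos (rfl : (0:ℕ) = 0),
    if_neg (by omega : ¬ (1:ℕ) ≤ 0)] at h
  linear_combination h

lemma lamC' (hk : 2 ≤ k) (heq : liftC (extCols n k v B₁) * FPhi n k a b c Pm =
      blockTr (FPhi n k a b c Pm) * liftC (extRows n k w B₂))
    (m : ℕ) (h1 : 1 ≤ m) (hm : m < k) (r t : Fin n) :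
    b2f n k B₂ (m - 1) 0 r t = v ⟨m, hm⟩ * ((a (k - 1))⁻¹ * Pm k r t) := by
  have h := lemLam n k hk a b c Pm v w B₁ B₂ heq m 0 hm (by omega) r t
  rw [if_pos (rfl : (0:ℕ) = 0), if_neg (by omega : ¬ (1:ℕ) ≤ 0),
    if_neg (by omega : ¬ m = 0), if_pos h1] at h
  linear_combination -h

lemma lamA (hk : 2 ≤ k) (heq : liftC (extCols n k v B₁) * FPhi n k a b c Pm =
      blockTr (FPhi n k a b c Pm) * liftC (extRows n k w B₂))
    (i j : ℕ) (h1 : 1 ≤ i) (h2 : 1 ≤ j) (hi : i < k) (hj : j < k) (r t : Fin n) :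
    b1f n k B₁ i (j - 1) r t = b2f n k B₂ (i - 1) j r t := by
  have h := lemLam n k hk a b c Pm v w B₁ B₂ heq i j hi hj r t
  rw [if_neg (by omega : ¬ j = 0), if_pos h2, if_neg (by omega : ¬ i = 0), if_pos h1] at h
  linear_combination h

lemma lamD (hk : 2 ≤ k) (heq : liftC (extCols n k v B₁) * FPhi n k a b c Pm =
      blockTr (FPhi n k a b c Pm) * liftC (extRows n k w B₂))
    (ha : ∀ j, a j ≠ 0) (r t : Fin n) (hrt : Pm k r t ≠ 0) (hm : 0 < k) :
    v ⟨0, hm⟩ = w ⟨0, hm⟩ := by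
  have h := lemLam n k hk a b c Pm v w B₁ B₂ heq 0 0 hm hm r t
  rw [if_pos (rfl : (0:ℕ) = 0), if_neg (by omega : ¬ (1:ℕ) ≤ 0),
    if_neg (by omega : ¬ (1:ℕ) ≤ 0)] at h
  have hz : (a (k - 1))⁻¹ * Pm k r t ≠ 0 := mul_ne_zero (inv_ne_zero (ha _)) hrt
  apply mul_right_cancel₀ hz
  linear_combination h

end Lam

end S14

theorem statement_14
    (n k : ℕ) (hn : 0 < n) (hk : 2 ≤ k)
    (a b c : ℕ → ℝ) (ha : ∀ j, a j ≠ 0)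
    (φ : ℕ → Polynomial ℝ) (hφ0 : φ 0 = 1)
    (hφ1 : C (a 0) * φ 1 = (X - C (b 0)) * φ 0)
    (hφrec : ∀ j, C (a (j + 1)) * φ (j + 2) =
      (X - C (b (j + 1))) * φ (j + 1) - C (c (j + 1)) * φ j)
    (Pm : ℕ → Matrix (Fin n) (Fin n) ℝ) (hPk : Pm k ≠ 0)
    (v w : Fin k → ℝ) (B₁ : Matrix (Fin k × Fin n) (Fin (k - 1) × Fin n) ℝ)
    (B₂ : Matrix (Fin (k - 1) × Fin n) (Fin k × Fin n) ℝ)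
    (heq : liftC (extCols n k v B₁) * FPhi n k a b c Pm =
      blockTr (FPhi n k a b c Pm) * liftC (extRows n k w B₂)) :
    v = w ∧ B₁ = blockTr B₂ := by
  classical
  have hk0 : 0 < k := by omega
  obtain ⟨r0, t0, hrt⟩ : ∃ r t, Pm k r t ≠ 0 := by
    by_contra hcon
    push_neg at hcon
    apply hPk
    ext r t
    simpa using hcon r t
  -- the big induction
  have KEY : ∀ D : ℕ,
      (∀ m, 1 ≤ m → m + 1 ≤ k → 2*m ≤ D → ∀ (hm : m < k), v ⟨m, hm⟩ = w ⟨m, hm⟩) ∧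
      (∀ p q, p + 1 ≤ q → q ≤ k - 1 → 2*(p+q)+1 ≤ D →
        ∀ r t, S14.b2f n k B₂ p q r t = S14.b2f n k B₂ (q-1) (p+1) r t) := by
    intro D
    induction D using Nat.strong_induction_on with
    | _ D IH =>
    constructor
    · -- S1 : v_m = w_m
      intro m hm1 hmk hD hm
      by_cases hm'' : m = 1
      · subst hm''
        have h := S14.lemCc n k hk a b c Pm v w B₁ B₂ heq 0 0 hk0 hk0 r0 t0
        rw [if_pos (show (0:ℕ)+1 ≤ k - 1 by omega), if_pos (show (0:ℕ)+1 ≤ k - 1 by omega),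
          if_neg (show ¬(1:ℕ) ≤ 0 by omega), if_neg (show ¬(1:ℕ) ≤ 0 by omega),
          if_neg (show ¬(2:ℕ) ≤ 0 by omega), if_neg (show ¬(2:ℕ) ≤ 0 by omega)] at h
        have hD0 := S14.lamD n k a b c Pm v w B₁ B₂ hk heq ha r0 t0 hrt hk0
        have hB : S14.b1f n k B₁ 0 0 r0 t0 =
            (a (k - 1))⁻¹ * Pm k r0 t0 * w ⟨1, hm⟩ :=
          S14.lamB n k a b c Pm v w B₁ B₂ hk heq 1 (by omega) hm r0 t0
        have hC : S14.b2f n k B₂ 0 0 r0 t0 =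
            v ⟨1, hm⟩ * ((a (k - 1))⁻¹ * Pm k r0 t0) :=
          S14.lamC' n k a b c Pm v w B₁ B₂ hk heq 1 (by omega) hm r0 t0
        rw [hB, hC, hD0] at h
        have hz : (a (k - 1))⁻¹ * Pm k r0 t0 * a (k - 2 - 0) ≠ 0 :=
          mul_ne_zero (mul_ne_zero (inv_ne_zero (ha _)) hrt) (ha _)
        apply mul_right_cancel₀ hz
        linear_combination h
      · obtain ⟨q, rfl⟩ : ∃ q, m = q + 1 := ⟨m - 1, by omega⟩
        have hq1 : 1 ≤ q := by omega
        have hqlt : q < k := by omega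
        have h1 := S14.lemCc n k hk a b c Pm v w B₁ B₂ heq q 0 hqlt hk0 r0 t0
        have h2 := S14.lemCc n k hk a b c Pm v w B₁ B₂ heq 0 q hk0 hqlt r0 t0
        rw [if_pos (show (0:ℕ)+1 ≤ k - 1 by omega),
          if_neg (show ¬(1:ℕ) ≤ 0 by omega), if_neg (show ¬(2:ℕ) ≤ 0 by omega),
          if_pos (show q+1 ≤ k - 1 by omega), if_pos hq1] at h1
        rw [if_pos (show q+1 ≤ k - 1 by omega), if_pos hq1,
          if_pos (show (0:ℕ)+1 ≤ k - 1 by omega),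
          if_neg (show ¬(1:ℕ) ≤ 0 by omega), if_neg (show ¬(2:ℕ) ≤ 0 by omega)] at h2
        have sA : S14.b1f n k B₁ q 0 r0 t0 = S14.b2f n k B₂ (q-1) 1 r0 t0 :=
          S14.lamA n k a b c Pm v w B₁ B₂ hk heq q 1 hq1 (by omega) hqlt (by omega) r0 t0
        have sB1 : S14.b1f n k B₁ 0 q r0 t0 =
            (a (k - 1))⁻¹ * Pm k r0 t0 * w ⟨q+1, hm⟩ :=
          S14.lamB n k a b c Pm v w B₁ B₂ hk heq (q+1) (by omega) hm r0 t0
        have sB2 : S14.b1f n k B₁ 0 (q-1) r0 t0 =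
            (a (k - 1))⁻¹ * Pm k r0 t0 * w ⟨q, hqlt⟩ :=
          S14.lamB n k a b c Pm v w B₁ B₂ hk heq q hq1 hqlt r0 t0
        have sC1 : S14.b2f n k B₂ q 0 r0 t0 =
            v ⟨q+1, hm⟩ * ((a (k - 1))⁻¹ * Pm k r0 t0) :=
          S14.lamC' n k a b c Pm v w B₁ B₂ hk heq (q+1) (by omega) hm r0 t0
        have sC2 : S14.b2f n k B₂ (q-1) 0 r0 t0 =
            v ⟨q, hqlt⟩ * ((a (k - 1))⁻¹ * Pm k r0 t0) :=
          S14.lamC' n k a b c Pm v w B₁ B₂ hk heq q hq1 hqlt r0 t0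
        have sv1 : v ⟨q, hqlt⟩ = w ⟨q, hqlt⟩ :=
          (IH (2*q) (by omega)).1 q hq1 (by omega) (le_refl _) hqlt
        have sv0 := S14.lamD n k a b c Pm v w B₁ B₂ hk heq ha r0 t0 hrt hk0
        have sDel : S14.b2f n k B₂ 0 q r0 t0 = S14.b2f n k B₂ (q-1) 1 r0 t0 := by
          have hh := (IH (2*(0+q)+1) (by omega)).2 0 q (by omega) (by omega) (le_refl _) r0 t0
          rw [show (0:ℕ)+1 = 1 from rfl] at hh
          exact hh
        rw [sA, sC1, sC2, sv1] at h1
        rw [sB1, sB2, sv0, sDel] at h2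
        have hz : (a (k - 1))⁻¹ * Pm k r0 t0 * a (k - 2 - q) ≠ 0 :=
          mul_ne_zero (mul_ne_zero (inv_ne_zero (ha _)) hrt) (ha _)
        apply mul_right_cancel₀ hz
        by_cases hq2 : 2 ≤ q
        · have hq1lt : q - 1 < k := by omega
          rw [if_pos hq2] at h1 h2
          have sB3 : S14.b1f n k B₁ 0 (q-2) r0 t0 =
              (a (k - 1))⁻¹ * Pm k r0 t0 * w ⟨q-1, hq1lt⟩ :=
            S14.lamB n k a b c Pm v w B₁ B₂ hk heq (q-1) (by omega) hq1lt r0 t0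
          have sC3 : S14.b2f n k B₂ (q-2) 0 r0 t0 =
              v ⟨q-1, hq1lt⟩ * ((a (k - 1))⁻¹ * Pm k r0 t0) :=
            S14.lamC' n k a b c Pm v w B₁ B₂ hk heq (q-1) (by omega) hq1lt r0 t0
          have sv2 : v ⟨q-1, hq1lt⟩ = w ⟨q-1, hq1lt⟩ :=
            (IH (2*(q-1)) (by omega)).1 (q-1) (by omega) (by omega) (le_refl _) hq1lt
          rw [sC3, sv2] at h1
          rw [sB3] at h2
          linear_combination h1 + h2
        · rw [if_neg hq2] at h1 h2
          linear_combination h1 + h2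
    · -- S2 : reflection identities
      intro p q hpq hqk hD r t
      have INNER : ∀ g, ∀ p' q', p' + q' = p + q → q' - p' ≤ g → p' + 1 ≤ q' →
          q' ≤ k - 1 → ∀ r' t',
          S14.b2f n k B₂ p' q' r' t' = S14.b2f n k B₂ (q'-1) (p'+1) r' t' := by
        intro g
        induction g using Nat.strong_induction_on with
        | _ g IHg =>
        intro p' q' hsum hgap hpq' hqk' r' t'
        by_cases hc1 : q' = p' + 1
        · subst hc1; rfl
        · by_cases hc2 : q' = p' + 2
          · subst hc2
            have hp1k : p' + 1 < k := by omega
            have h := S14.lemCc n k hk a b c Pm v w B₁ B₂ heq (p'+1) (p'+1) hp1k hp1k r' t'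
            rw [if_pos (show p'+1+1 ≤ k - 1 by omega), if_pos (show p'+1+1 ≤ k - 1 by omega),
              if_pos (show 1 ≤ p'+1 by omega), if_pos (show 1 ≤ p'+1 by omega),
              show p'+1-1 = p' from rfl] at h
            have sA1 : S14.b1f n k B₁ (p'+1) (p'+1) r' t' = S14.b2f n k B₂ p' (p'+2) r' t' :=
              S14.lamA n k a b c Pm v w B₁ B₂ hk heq (p'+1) (p'+2)
                (by omega) (by omega) hp1k (by omega) r' t'
            have sA2 : S14.b1f n k B₁ (p'+1) p' r' t' = S14.b2f n k B₂ p' (p'+1) r' t' :=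
              S14.lamA n k a b c Pm v w B₁ B₂ hk heq (p'+1) (p'+1)
                (by omega) (by omega) hp1k hp1k r' t'
            have sv : v ⟨p'+1, hp1k⟩ = w ⟨p'+1, hp1k⟩ :=
              (IH (2*(p'+1)) (by omega)).1 (p'+1) (by omega) (by omega) (le_refl _) hp1k
            rw [sA1, sA2, sv] at h
            rw [show p'+2-1 = p'+1 from rfl]
            apply mul_left_cancel₀ (ha (k - 2 - (p'+1)))
            by_cases hp1 : 1 ≤ p'
            · rw [if_pos (show 2 ≤ p'+1 by omega), if_pos (show 2 ≤ p'+1 by omega),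
                show p'+1-2 = p'-1 from by omega] at h
              have sA3 : S14.b1f n k B₁ (p'+1) (p'-1) r' t' = S14.b2f n k B₂ p' p' r' t' :=
                S14.lamA n k a b c Pm v w B₁ B₂ hk heq (p'+1) p'
                  (by omega) hp1 hp1k (by omega) r' t'
              have sD2 : S14.b2f n k B₂ (p'-1) (p'+1) r' t' = S14.b2f n k B₂ p' p' r' t' := by
                have hh := (IH (2*((p'-1)+(p'+1))+1) (by omega)).2 (p'-1) (p'+1)
                  (by omega) (by omega) (le_refl _) r' t'
                rw [show p'+1-1 = p' from rfl, show p'-1+1 = p' from by omega] at hh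
                exact hh
              rw [sA3, sD2] at h
              linear_combination -h
            · rw [if_neg (show ¬ 2 ≤ p'+1 by omega), if_neg (show ¬ 2 ≤ p'+1 by omega)] at h
              linear_combination -h
          · -- main case : q' ≥ p' + 3
            have hp3 : p' + 3 ≤ q' := by omega
            have hp1k : p' + 1 < k := by omega
            have hq1k : q' - 1 < k := by omega
            have h1 := S14.lemCc n k hk a b c Pm v w B₁ B₂ heq (p'+1) (q'-1) hp1k hq1k r' t'
            have h2 := S14.lemCc n k hk a b c Pm v w B₁ B₂ heq (q'-1) (p'+1) hq1k hp1k r' t'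
            rw [if_pos (show q'-1+1 ≤ k - 1 by omega), if_pos (show 1 ≤ q'-1 by omega),
              if_pos (show 2 ≤ q'-1 by omega), if_pos (show p'+1+1 ≤ k - 1 by omega),
              if_pos (show 1 ≤ p'+1 by omega),
              show q'-1-1 = q'-2 from by omega, show q'-1-2 = q'-3 from by omega,
              show p'+1-1 = p' from rfl] at h1
            rw [if_pos (show p'+1+1 ≤ k - 1 by omega), if_pos (show 1 ≤ p'+1 by omega),
              if_pos (show q'-1+1 ≤ k - 1 by omega), if_pos (show 1 ≤ q'-1 by omega),
              if_pos (show 2 ≤ q'-1 by omega),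
              show p'+1-1 = p' from rfl,
              show q'-1-1 = q'-2 from by omega, show q'-1-2 = q'-3 from by omega] at h2
            have m1 : S14.b1f n k B₁ (p'+1) (q'-1) r' t' = S14.b2f n k B₂ p' q' r' t' :=
              S14.lamA n k a b c Pm v w B₁ B₂ hk heq (p'+1) q'
                (by omega) (by omega) hp1k (by omega) r' t'
            have m2 : S14.b1f n k B₁ (p'+1) (q'-2) r' t' = S14.b2f n k B₂ p' (q'-1) r' t' :=
              S14.lamA n k a b c Pm v w B₁ B₂ hk heq (p'+1) (q'-1)
                (by omega) (by omega) hp1k hq1k r' t'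
            have m3 : S14.b1f n k B₁ (p'+1) (q'-3) r' t' = S14.b2f n k B₂ p' (q'-2) r' t' :=
              S14.lamA n k a b c Pm v w B₁ B₂ hk heq (p'+1) (q'-2)
                (by omega) (by omega) hp1k (by omega) r' t'
            have m4 : S14.b1f n k B₁ (q'-1) (p'+1) r' t' = S14.b2f n k B₂ (q'-2) (p'+2) r' t' :=
              S14.lamA n k a b c Pm v w B₁ B₂ hk heq (q'-1) (p'+2)
                (by omega) (by omega) hq1k (by omega) r' t'
            have m5 : S14.b1f n k B₁ (q'-1) p' r' t' = S14.b2f n k B₂ (q'-2) (p'+1) r' t' :=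
              S14.lamA n k a b c Pm v w B₁ B₂ hk heq (q'-1) (p'+1)
                (by omega) (by omega) hq1k hp1k r' t'
            have e1 : S14.b2f n k B₂ (p'+1) (q'-1) r' t' = S14.b2f n k B₂ (q'-2) (p'+2) r' t' := by
              have hh := IHg (q'-p'-2) (by omega) (p'+1) (q'-1) (by omega) (by omega)
                (by omega) (by omega) r' t'
              rw [show q'-1-1 = q'-2 from by omega, show p'+1+1 = p'+2 from rfl] at hh
              exact hh
            have e2 : S14.b2f n k B₂ p' (q'-1) r' t' = S14.b2f n k B₂ (q'-2) (p'+1) r' t' := by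
              have hh := (IH (2*(p'+(q'-1))+1) (by omega)).2 p' (q'-1)
                (by omega) (by omega) (le_refl _) r' t'
              rw [show q'-1-1 = q'-2 from by omega] at hh
              exact hh
            have e3 : S14.b2f n k B₂ p' (q'-2) r' t' = S14.b2f n k B₂ (q'-3) (p'+1) r' t' := by
              have hh := (IH (2*(p'+(q'-2))+1) (by omega)).2 p' (q'-2)
                (by omega) (by omega) (le_refl _) r' t'
              rw [show q'-2-1 = q'-3 from by omega] at hh
              exact hh
            have sv1 : v ⟨p'+1, hp1k⟩ = w ⟨p'+1, hp1k⟩ :=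
              (IH (2*(p'+1)) (by omega)).1 (p'+1) (by omega) (by omega) (le_refl _) hp1k
            have sv2 : v ⟨q'-1, hq1k⟩ = w ⟨q'-1, hq1k⟩ :=
              (IH (2*(q'-1)) (by omega)).1 (q'-1) (by omega) (by omega) (le_refl _) hq1k
            rw [m1, m2, m3, e1, e2, e3, sv1] at h1
            rw [m4, m5, sv2] at h2
            apply mul_left_cancel₀ (ha (k - 2 - (q'-1)))
            by_cases hp1 : 1 ≤ p'
            · rw [if_pos (show 2 ≤ p'+1 by omega), show p'+1-2 = p'-1 from by omega] at h1 h2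
              have m6 : S14.b1f n k B₁ (q'-1) (p'-1) r' t' = S14.b2f n k B₂ (q'-2) p' r' t' :=
                S14.lamA n k a b c Pm v w B₁ B₂ hk heq (q'-1) p'
                  (by omega) hp1 hq1k (by omega) r' t'
              have e4 : S14.b2f n k B₂ (p'-1) (q'-1) r' t' = S14.b2f n k B₂ (q'-2) p' r' t' := by
                have hh := (IH (2*((p'-1)+(q'-1))+1) (by omega)).2 (p'-1) (q'-1)
                  (by omega) (by omega) (le_refl _) r' t'
                rw [show q'-1-1 = q'-2 from by omega, show p'-1+1 = p' from by omega] at hh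
                exact hh
              rw [e4] at h1
              rw [m6] at h2
              linear_combination -h1 - h2
            · rw [if_neg (show ¬ 2 ≤ p'+1 by omega)] at h1 h2
              linear_combination -h1 - h2
      exact INNER (q - p) p q rfl (le_refl _) hpq hqk r t
  -- conclusions
  have hvw : ∀ (mv : ℕ) (hmv : mv < k), v ⟨mv, hmv⟩ = w ⟨mv, hmv⟩ := by
    intro mv hmv
    by_cases h0 : mv = 0
    · subst h0
      exact S14.lamD n k a b c Pm v w B₁ B₂ hk heq ha r0 t0 hrt hmv
    · exact (KEY (2*mv)).1 mv (by omega) (by omega) (le_refl _) hmv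
  constructor
  · funext m
    obtain ⟨mv, hmv⟩ := m
    exact hvw mv hmv
  · ext ⟨i, r⟩ ⟨m, t⟩
    obtain ⟨iv, hiv⟩ := i
    obtain ⟨mv, hmv⟩ := m
    have hL : S14.b1f n k B₁ iv mv r t = B₁ (⟨iv, hiv⟩, r) (⟨mv, hmv⟩, t) :=
      dif_pos ⟨hiv, hmv⟩
    have hR : S14.b2f n k B₂ mv iv r t = B₂ (⟨mv, hmv⟩, r) (⟨iv, hiv⟩, t) :=
      dif_pos ⟨hmv, hiv⟩
    show B₁ (⟨iv, hiv⟩, r) (⟨mv, hmv⟩, t) = B₂ (⟨mv, hmv⟩, r) (⟨iv, hiv⟩, t)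
    rw [← hL, ← hR]
    by_cases h0 : iv = 0
    · subst h0
      have hmk : mv + 1 < k := by omega
      have e1 : S14.b1f n k B₁ 0 mv r t =
          (a (k - 1))⁻¹ * Pm k r t * w ⟨mv+1, hmk⟩ :=
        S14.lamB n k a b c Pm v w B₁ B₂ hk heq (mv+1) (by omega) hmk r t
      have e2 : S14.b2f n k B₂ mv 0 r t =
          v ⟨mv+1, hmk⟩ * ((a (k - 1))⁻¹ * Pm k r t) :=
        S14.lamC' n k a b c Pm v w B₁ B₂ hk heq (mv+1) (by omega) hmk r t
      rw [e1, e2, hvw (mv+1) hmk]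
      ring
    · have hiv1 : 1 ≤ iv := by omega
      have eA : S14.b1f n k B₁ iv mv r t = S14.b2f n k B₂ (iv-1) (mv+1) r t :=
        S14.lamA n k a b c Pm v w B₁ B₂ hk heq iv (mv+1) hiv1 (by omega) hiv (by omega) r t
      rw [eA]
      by_cases hcase : iv ≤ mv + 1
      · have hh := (KEY (2*((iv-1)+(mv+1))+1)).2 (iv-1) (mv+1)
          (by omega) (by omega) (le_refl _) r t
        rw [show mv+1-1 = mv from rfl, show iv-1+1 = iv from by omega] at hh
        exact hh
      · exact ((KEY (2*(mv+iv)+1)).2 mv iv (by omega) (by omega) (le_refl _) r t).symm
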